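/- Let w* = (1/(‖μ‖₂·√(1+γ²)))·[γμ, μ, 0_d] ∈ ℝ^{3d}. Then w* has the least 0-1 classification error on the context-c1 distribution among all norm-bounded linear predictors: for every w ∈ W1, Acc_{P_{c1}}(w) ≤ Acc_{P_{c1}}(w*). -/

import Mathlib

open MeasureTheory ProbabilityTheory Real Filter
open scoped ENNReal NNReal

noncomputable section

/-- Complementary error function `erfc x = (2/√π) ∫_x^∞ e^{−t²} dt`. -/
def erfc (x : ℝ) : ℝ := 2 / Real.sqrt Real.pi * ∫ t in Set.Ioi x, Real.exp (-t ^ 2)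

/-- A vector in `ℝ^d`. -/
abbrev Vec (d : ℕ) := Fin d → ℝ

/-- The input space `ℝ^{3d}`, viewed as three blocks `x = [x1, x2, x3]`. -/
abbrev Inp (d : ℕ) := Vec d × Vec d × Vec d

/-- Euclidean dot product on `ℝ^d`. -/
def dot {d : ℕ} (v w : Vec d) : ℝ := ∑ i, v i * w i

/-- Euclidean norm on `ℝ^d`. -/
def vnorm {d : ℕ} (v : Vec d) : ℝ := Real.sqrt (∑ i, v i ^ 2)

/-- Euclidean norm on the full input space `ℝ^{3d}`. -/
def xnorm {d : ℕ} (x : Inp d) : ℝ :=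
  Real.sqrt ((∑ i, x.1 i ^ 2) + (∑ i, x.2.1 i ^ 2) + ∑ i, x.2.2 i ^ 2)

/-- Value `wᵀx` of the linear predictor `w` at input `x`. -/
def pred {d : ℕ} (w x : Inp d) : ℝ := dot w.1 x.1 + dot w.2.1 x.2.1 + dot w.2.2 x.2.2

/-- Isotropic Gaussian `N(m, v·I_d)` on `ℝ^d` (product of coordinate Gaussians). -/
def gaussVec (d : ℕ) (m : Vec d) (v : ℝ) : Measure (Vec d) :=
  Measure.pi fun i => gaussianReal (m i) (Real.toNNReal v)

/-- Conditional law of `x` given the label `y` in context `c1`: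
`x1 ~ N(μy, σ²I)`, `x2 ~ N(μy, γσ²I)`, `x3 ~ N(μ, η²I)`, independent blocks. -/
def condX1 (d : ℕ) (μ : Vec d) (σ γ η : ℝ) (y : ℝ) : Measure (Inp d) :=
  (gaussVec d (fun i => μ i * y) (σ ^ 2)).prod
    ((gaussVec d (fun i => μ i * y) (γ * σ ^ 2)).prod
      (gaussVec d μ (η ^ 2)))

/-- Conditional law of `x` given the label `y` in context `c2`:
`x1 ~ N(μy, σ²I)`, `x2 ~ N(−μy, (σ²/γ)I)`, `x3 ~ N(−μ, η²I)`, independent blocks. -/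
def condX2 (d : ℕ) (μ : Vec d) (σ γ η : ℝ) (y : ℝ) : Measure (Inp d) :=
  (gaussVec d (fun i => μ i * y) (σ ^ 2)).prod
    ((gaussVec d (fun i => -μ i * y) (σ ^ 2 / γ)).prod
      (gaussVec d (fun i => -μ i) (η ^ 2)))

/-- Joint law of `(x, y)`: `y` uniform on `{−1, 1}`, then `x ~ cond y`. -/
def jointOf {d : ℕ} (cond : ℝ → Measure (Inp d)) : Measure (Inp d × ℝ) :=
  (2 : ℝ≥0∞)⁻¹ • (cond 1).prod (Measure.dirac (1 : ℝ))
    + (2 : ℝ≥0∞)⁻¹ • (cond (-1)).prod (Measure.dirac (-1 : ℝ))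

/-- The context-`c1` distribution over `(x, y)`. -/
def Pc1 (d : ℕ) (μ : Vec d) (σ γ η : ℝ) : Measure (Inp d × ℝ) :=
  jointOf (condX1 d μ σ γ η)

/-- The context-`c2` distribution over `(x, y)`. -/
def Pc2 (d : ℕ) (μ : Vec d) (σ γ η : ℝ) : Measure (Inp d × ℝ) :=
  jointOf (condX2 d μ σ γ η)

/-- Accuracy `Acc_P(w) = P(sign(wᵀx) = y)` of linear predictor `w` under joint law `P`. -/
def AccP {d : ℕ} (P : Measure (Inp d × ℝ)) (w : Inp d) : ℝ :=
  (P {p | Real.sign (pred w p.1) = p.2}).toReal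

/-- Norm-bounded linear predictors `W1 = {w ∈ ℝ^{3d} : ‖w‖₂ ≤ 1}`. -/
def W1 (d : ℕ) : Set (Inp d) := {w | xnorm w ≤ 1}

/-- Population exponential loss `E_P[exp(−y·wᵀx)]`. -/
def expLoss {d : ℕ} (P : Measure (Inp d × ℝ)) (w : Inp d) : ℝ :=
  ∫ p, Real.exp (-(p.2 * pred w p.1)) ∂P

end

noncomputable section
lemma my_lintegral_pi_prod {n : ℕ} (μm : Fin n → Measure ℝ) [∀ i, SigmaFinite (μm i)]
    (f : Fin n → ℝ → ℝ≥0∞) (hf : ∀ i, Measurable (f i)) :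
    ∫⁻ x, ∏ i, f i (x i) ∂(Measure.pi μm) = ∏ i, ∫⁻ t, f i t ∂(μm i) := by
  induction n with
  | zero => simp [Measure.pi_univ]
  | succ n ih =>
    set e := MeasurableEquiv.piFinSuccAbove (fun _ : Fin (n+1) => ℝ) 0 with he
    have hmp := (measurePreserving_piFinSuccAbove μm 0).symm e
    have hmeas : Measurable fun x : Fin (n+1) → ℝ => ∏ i, f i (x i) :=
      Finset.measurable_prod _ fun i _ => (hf i).comp (measurable_pi_apply i)
    rw [← hmp.lintegral_comp hmeas]
    have h1 : ∀ p : ℝ × (Fin n → ℝ),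
        (∏ i, f i (e.symm p i)) = f 0 p.1 * ∏ j, f (Fin.succAbove 0 j) (p.2 j) := by
      intro p
      rw [Fin.prod_univ_succAbove (fun i => f i (e.symm p i)) 0]
      simp [he, MeasurableEquiv.piFinSuccAbove]
    simp_rw [h1]
    have h2 := lintegral_prod_mul (μ := μm 0)
      (ν := Measure.pi fun j => μm (Fin.succAbove 0 j)) (f := f 0)
      (g := fun b : Fin n → ℝ => ∏ j, f (Fin.succAbove 0 j) (b j)) ((hf 0).aemeasurable)
      ((Finset.measurable_prod _ fun j _ => (hf _).comp (measurable_pi_apply j)).aemeasurable)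
    rw [h2, ih _ _ fun j => hf _, Fin.prod_univ_succAbove (fun i => ∫⁻ t, f i t ∂(μm i)) 0]

lemma my_pi_withDensity {n : ℕ} (f : Fin n → ℝ → ℝ≥0∞) (hf : ∀ i, Measurable (f i))
    [∀ i, SigmaFinite ((volume : Measure ℝ).withDensity (f i))] :
    Measure.pi (fun i => (volume : Measure ℝ).withDensity (f i))
      = (volume : Measure (Fin n → ℝ)).withDensity (fun x => ∏ i, f i (x i)) := by
  refine Measure.pi_eq fun s hs => ?_
  rw [withDensity_apply _ (MeasurableSet.univ_pi hs), MeasureTheory.volume_pi,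
    ← lintegral_indicator (MeasurableSet.univ_pi hs)]
  have key : ∀ x : Fin n → ℝ,
      (Set.pi Set.univ s).indicator (fun x => ∏ i, f i (x i)) x
        = ∏ i, (s i).indicator (f i) (x i) := by
    intro x
    by_cases hx : x ∈ Set.pi Set.univ s
    · rw [Set.indicator_of_mem hx]
      exact Finset.prod_congr rfl fun i _ =>
        (Set.indicator_of_mem (hx i (Set.mem_univ i)) _).symm
    · rw [Set.indicator_of_notMem hx]
      obtain ⟨i, hi⟩ : ∃ i, x i ∉ s i := by simpa [Set.mem_pi] using hx
      exact (Finset.prod_eq_zero (Finset.mem_univ i)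
        (by rw [Set.indicator_of_notMem hi])).symm
  simp_rw [key]
  rw [my_lintegral_pi_prod _ _ fun i => (hf i).indicator (hs i)]
  exact Finset.prod_congr rfl fun i _ => by
    rw [lintegral_indicator (hs i), ← withDensity_apply _ (hs i)]

lemma my_prod_withDensity {α β : Type*} [MeasurableSpace α] [MeasurableSpace β]
    (μ : Measure α) (ν : Measure β) [SFinite μ] [SFinite ν]
    (f : α → ℝ≥0∞) (g : β → ℝ≥0∞) (hf : Measurable f) (hg : Measurable g)
    [SigmaFinite (μ.withDensity f)] [SigmaFinite (ν.withDensity g)] :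
    (μ.withDensity f).prod (ν.withDensity g)
      = (μ.prod ν).withDensity (fun p => f p.1 * g p.2) := by
  refine Measure.prod_eq fun s t hs ht => ?_
  rw [withDensity_apply _ (hs.prod ht), withDensity_apply _ hs, withDensity_apply _ ht,
    ← lintegral_indicator (hs.prod ht), ← lintegral_indicator hs, ← lintegral_indicator ht]
  have h2 := lintegral_prod_mul (μ := μ) (ν := ν) (f := s.indicator f) (g := t.indicator g)
    ((hf.indicator hs).aemeasurable) ((hg.indicator ht).aemeasurable)
  rw [← h2]
  congr 1
  funext p
  by_cases hps : p.1 ∈ s <;> by_cases hpt : p.2 ∈ t <;>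
    simp [Set.indicator_apply, Set.mem_prod, hps, hpt]


instance gaussVec_prob {d : ℕ} (m : Vec d) (v : ℝ) : IsProbabilityMeasure (gaussVec d m v) := by
  unfold gaussVec; infer_instance

lemma gaussVec_eq_withDensity {d : ℕ} (m : Vec d) {v : ℝ} (hv : 0 < v) :
    gaussVec d m v = (volume : Measure (Vec d)).withDensity
      (fun x => ∏ i, gaussianPDF (m i) v.toNNReal (x i)) := by
  have hne : v.toNNReal ≠ 0 := fun h => absurd (Real.toNNReal_eq_zero.mp h) (not_le.mpr hv)
  have h1 : ∀ i : Fin d, gaussianReal (m i) v.toNNReal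
      = (volume : Measure ℝ).withDensity (gaussianPDF (m i) v.toNNReal) :=
    fun i => gaussianReal_of_var_ne_zero _ hne
  haveI : ∀ i : Fin d, SigmaFinite ((volume : Measure ℝ).withDensity
      (gaussianPDF (m i) v.toNNReal)) := fun i => by
    rw [← h1 i]; infer_instance
  rw [gaussVec]
  calc Measure.pi (fun i => gaussianReal (m i) v.toNNReal)
      = Measure.pi (fun i => (volume : Measure ℝ).withDensity (gaussianPDF (m i) v.toNNReal)) := by
        congr 1; funext i; exact h1 i
    _ = _ := my_pi_withDensity _ fun i => measurable_gaussianPDF _ _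

/-- density of `condX1` w.r.t. Lebesgue. -/
def densX1 {d : ℕ} (μ : Vec d) (σ γ η y : ℝ) : Inp d → ℝ≥0∞ := fun x =>
  (∏ i, gaussianPDF (μ i * y) (σ^2).toNNReal (x.1 i)) *
    ((∏ i, gaussianPDF (μ i * y) (γ*σ^2).toNNReal (x.2.1 i)) *
      (∏ i, gaussianPDF (μ i) (η^2).toNNReal (x.2.2 i)))

lemma measurable_prod_pdf {d : ℕ} (m : Vec d) (v : ℝ≥0) :
    Measurable fun t : Vec d => ∏ i, gaussianPDF (m i) v (t i) :=
  Finset.measurable_prod _ fun i _ =>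
    (measurable_gaussianPDF _ _).comp (measurable_pi_apply i)

lemma measurable_densX1 {d : ℕ} (μ : Vec d) (σ γ η y : ℝ) :
    Measurable (densX1 μ σ γ η y) :=
  ((measurable_prod_pdf _ _).comp measurable_fst).mul
    ((((measurable_prod_pdf _ _).comp measurable_fst).mul
      ((measurable_prod_pdf _ _).comp measurable_snd)).comp measurable_snd)

lemma condX1_eq_withDensity {d : ℕ} (μ : Vec d) {σ γ η : ℝ} (hσ : 0 < σ) (hγ : 0 < γ)
    (hη : 0 < η) (y : ℝ) :
    condX1 d μ σ γ η y = (volume : Measure (Inp d)).withDensity (densX1 μ σ γ η y) := by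
  have hσ2 : (0:ℝ) < σ^2 := by positivity
  have hγσ2 : (0:ℝ) < γ*σ^2 := by positivity
  have hη2 : (0:ℝ) < η^2 := by positivity
  haveI i1 : SigmaFinite ((volume : Measure (Vec d)).withDensity
      (fun t => ∏ i, gaussianPDF (μ i * y) (σ^2).toNNReal (t i))) := by
    rw [← gaussVec_eq_withDensity _ hσ2]; infer_instance
  haveI i2 : SigmaFinite ((volume : Measure (Vec d)).withDensity
      (fun t => ∏ i, gaussianPDF (μ i * y) (γ*σ^2).toNNReal (t i))) := by
    rw [← gaussVec_eq_withDensity _ hγσ2]; infer_instance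
  haveI i3 : SigmaFinite ((volume : Measure (Vec d)).withDensity
      (fun t => ∏ i, gaussianPDF (μ i) (η^2).toNNReal (t i))) := by
    rw [← gaussVec_eq_withDensity _ hη2]; infer_instance
  have hprod23 : (gaussVec d (fun i => μ i * y) (γ * σ ^ 2)).prod (gaussVec d μ (η ^ 2))
      = ((volume : Measure (Vec d)).prod (volume : Measure (Vec d))).withDensity
        (fun p => (∏ i, gaussianPDF (μ i * y) (γ*σ^2).toNNReal (p.1 i)) *
          (∏ i, gaussianPDF (μ i) (η^2).toNNReal (p.2 i))) := by
    rw [gaussVec_eq_withDensity _ hγσ2, gaussVec_eq_withDensity _ hη2]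
    exact my_prod_withDensity _ _ _ _ (measurable_prod_pdf _ _) (measurable_prod_pdf _ _)
  haveI i23 : SigmaFinite (((volume : Measure (Vec d)).prod (volume : Measure (Vec d))).withDensity
        (fun p => (∏ i, gaussianPDF (μ i * y) (γ*σ^2).toNNReal (p.1 i)) *
          (∏ i, gaussianPDF (μ i) (η^2).toNNReal (p.2 i)))) := by
    rw [← hprod23]; infer_instance
  have hmain := my_prod_withDensity (μ := (volume : Measure (Vec d)))
    (ν := (volume : Measure (Vec d)).prod (volume : Measure (Vec d)))
    (f := fun t => ∏ i, gaussianPDF (μ i * y) (σ^2).toNNReal (t i))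
    (g := fun p => (∏ i, gaussianPDF (μ i * y) (γ*σ^2).toNNReal (p.1 i)) *
      (∏ i, gaussianPDF (μ i) (η^2).toNNReal (p.2 i)))
    (measurable_prod_pdf _ _)
    (((measurable_prod_pdf _ _).comp measurable_fst).mul
      ((measurable_prod_pdf _ _).comp measurable_snd))
  rw [condX1, hprod23, gaussVec_eq_withDensity _ hσ2, hmain]
  rw [show (volume : Measure (Inp d))
      = ((volume : Measure (Vec d)).prod ((volume : Measure (Vec d)).prod volume)) by
    rw [MeasureTheory.Measure.volume_eq_prod, MeasureTheory.Measure.volume_eq_prod]]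
  rfl



def realDensX1 {d : ℕ} (μ : Vec d) (σ γ η y : ℝ) : Inp d → ℝ := fun x =>
  (∏ i, gaussianPDFReal (μ i * y) (σ^2).toNNReal (x.1 i)) *
    ((∏ i, gaussianPDFReal (μ i * y) (γ*σ^2).toNNReal (x.2.1 i)) *
      (∏ i, gaussianPDFReal (μ i) (η^2).toNNReal (x.2.2 i)))

lemma realDensX1_nonneg {d : ℕ} (μ : Vec d) (σ γ η y : ℝ) (x : Inp d) :
    0 ≤ realDensX1 μ σ γ η y x := by
  refine mul_nonneg (Finset.prod_nonneg fun i _ => gaussianPDFReal_nonneg _ _ _)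
    (mul_nonneg (Finset.prod_nonneg fun i _ => gaussianPDFReal_nonneg _ _ _)
      (Finset.prod_nonneg fun i _ => gaussianPDFReal_nonneg _ _ _))

lemma densX1_eq_ofReal {d : ℕ} (μ : Vec d) (σ γ η y : ℝ) (x : Inp d) :
    densX1 μ σ γ η y x = ENNReal.ofReal (realDensX1 μ σ γ η y x) := by
  rw [densX1, realDensX1,
    ENNReal.ofReal_mul (Finset.prod_nonneg fun i _ => gaussianPDFReal_nonneg _ _ _),
    ENNReal.ofReal_mul (Finset.prod_nonneg fun i _ => gaussianPDFReal_nonneg _ _ _),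
    ENNReal.ofReal_prod_of_nonneg (fun i _ => gaussianPDFReal_nonneg _ _ _),
    ENNReal.ofReal_prod_of_nonneg (fun i _ => gaussianPDFReal_nonneg _ _ _),
    ENNReal.ofReal_prod_of_nonneg (fun i _ => gaussianPDFReal_nonneg _ _ _)]
  rfl

lemma pdf_flip (m t : ℝ) {v : ℝ≥0} (hv : 0 < (v:ℝ)) :
    gaussianPDFReal (-m) v t = gaussianPDFReal m v t * Real.exp (-(2*(m*t))/(v:ℝ)) := by
  simp only [gaussianPDFReal, mul_assoc, ← Real.exp_add]
  congr 1
  field_simp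
  ring

lemma flip_prod {d : ℕ} (m t : Vec d) {v : ℝ≥0} (hv : 0 < (v:ℝ)) :
    ∏ i, gaussianPDFReal (-(m i)) v (t i)
      = (∏ i, gaussianPDFReal (m i) v (t i)) * Real.exp (-(2 * dot m t)/(v:ℝ)) := by
  simp_rw [pdf_flip _ _ hv]
  rw [Finset.prod_mul_distrib, ← Real.exp_sum]
  congr 2
  rw [dot, ← Finset.sum_div, Finset.sum_neg_distrib, ← Finset.mul_sum]

lemma realDensX1_flip {d : ℕ} (μ : Vec d) {σ γ η : ℝ} (hσ : 0 < σ) (hγ : 0 < γ) (x : Inp d) :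
    realDensX1 μ σ γ η (-1) x
      = realDensX1 μ σ γ η 1 x
        * Real.exp (-(2/(γ*σ^2)) * (γ * dot μ x.1 + dot μ x.2.1)) := by
  have hσ2 : (0:ℝ) < ((σ^2).toNNReal : ℝ) := by
    rw [Real.coe_toNNReal _ (by positivity)]; positivity
  have hγσ2 : (0:ℝ) < ((γ*σ^2).toNNReal : ℝ) := by
    rw [Real.coe_toNNReal _ (by positivity)]; positivity
  have e1 : ((σ^2).toNNReal : ℝ) = σ^2 := Real.coe_toNNReal _ (by positivity)
  have e2 : ((γ*σ^2).toNNReal : ℝ) = γ*σ^2 := Real.coe_toNNReal _ (by positivity)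
  rw [realDensX1, realDensX1]
  simp_rw [mul_neg_one, mul_one]
  rw [flip_prod _ _ hσ2, flip_prod _ _ hγσ2, e1, e2]
  rw [show -(2/(γ*σ^2)) * (γ * dot μ x.1 + dot μ x.2.1)
      = -(2 * dot μ x.1)/(σ^2) + -(2 * dot μ x.2.1)/(γ*σ^2) by field_simp; ring,
    Real.exp_add]
  ring

lemma densX1_le_of_nonpos {d : ℕ} (μ : Vec d) {σ γ : ℝ} (η : ℝ) (hσ : 0 < σ) (hγ : 0 < γ)
    {x : Inp d} (h : γ * dot μ x.1 + dot μ x.2.1 ≤ 0) :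
    densX1 μ σ γ η 1 x ≤ densX1 μ σ γ η (-1) x := by
  rw [densX1_eq_ofReal, densX1_eq_ofReal]
  refine ENNReal.ofReal_le_ofReal ?_
  rw [realDensX1_flip μ hσ hγ]
  refine le_mul_of_one_le_right (realDensX1_nonneg _ _ _ _ _ _) ?_
  rw [← Real.exp_zero]
  refine Real.exp_le_exp.mpr ?_
  have hc : -(2/(γ*σ^2)) ≤ 0 := by
    have : (0:ℝ) < 2/(γ*σ^2) := by positivity
    linarith
  nlinarith [mul_nonneg (neg_nonneg.2 hc) (neg_nonneg.2 h)]

lemma densX1_le_of_nonneg {d : ℕ} (μ : Vec d) {σ γ : ℝ} (η : ℝ) (hσ : 0 < σ) (hγ : 0 < γ)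
    {x : Inp d} (h : 0 ≤ γ * dot μ x.1 + dot μ x.2.1) :
    densX1 μ σ γ η (-1) x ≤ densX1 μ σ γ η 1 x := by
  rw [densX1_eq_ofReal, densX1_eq_ofReal]
  refine ENNReal.ofReal_le_ofReal ?_
  rw [realDensX1_flip μ hσ hγ]
  refine mul_le_of_le_one_right (realDensX1_nonneg _ _ _ _ _ _) ?_
  rw [← Real.exp_zero]
  refine Real.exp_le_exp.mpr ?_
  have hc : -(2/(γ*σ^2)) ≤ 0 := by
    have : (0:ℝ) < 2/(γ*σ^2) := by positivity
    linarith
  nlinarith [mul_nonneg (neg_nonneg.2 hc) h]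



instance condX1_prob {d : ℕ} (μ : Vec d) (σ γ η y : ℝ) :
    IsProbabilityMeasure (condX1 d μ σ γ η y) := by
  unfold condX1; infer_instance

lemma measurable_dot_fst {d : ℕ} (v : Vec d) : Measurable fun x : Inp d => dot v x.1 := by
  unfold dot
  exact Finset.measurable_sum _ fun i _ => by
    fun_prop

lemma measurable_dot_snd1 {d : ℕ} (v : Vec d) : Measurable fun x : Inp d => dot v x.2.1 := by
  unfold dot
  exact Finset.measurable_sum _ fun i _ => by
    fun_prop

lemma measurable_dot_snd2 {d : ℕ} (v : Vec d) : Measurable fun x : Inp d => dot v x.2.2 := by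
  unfold dot
  exact Finset.measurable_sum _ fun i _ => by
    fun_prop

lemma measurable_pred_app {d : ℕ} (w : Inp d) : Measurable fun x : Inp d => pred w x := by
  unfold pred
  exact ((measurable_dot_fst w.1).add (measurable_dot_snd1 w.2.1)).add
    (measurable_dot_snd2 w.2.2)

lemma my_measurable_sign : Measurable Real.sign := by
  unfold Real.sign
  exact Measurable.ite (measurableSet_lt measurable_id measurable_const) measurable_const
    (Measurable.ite (measurableSet_lt measurable_const measurable_id) measurable_const
      measurable_const)

lemma sign_eq_one_iff' (t : ℝ) : Real.sign t = 1 ↔ 0 < t := by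
  rcases lt_trichotomy t 0 with h | h | h
  · rw [Real.sign_of_neg h]; constructor <;> intro hh <;> [norm_num at hh; linarith]
  · subst h; simp
  · rw [Real.sign_of_pos h]; simp [h]

lemma sign_eq_neg_one_iff' (t : ℝ) : Real.sign t = -1 ↔ t < 0 := by
  rcases lt_trichotomy t 0 with h | h | h
  · rw [Real.sign_of_neg h]; simp [h]
  · subst h; simp
  · rw [Real.sign_of_pos h]; constructor <;> intro hh <;> [norm_num at hh; linarith]

lemma jointOf_apply {d : ℕ} (cond : ℝ → Measure (Inp d)) [SFinite (cond 1)]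
    [SFinite (cond (-1))] {S : Set (Inp d × ℝ)} (hS : MeasurableSet S) :
    jointOf cond S = 2⁻¹ * cond 1 ((fun x => (x, (1:ℝ))) ⁻¹' S)
      + 2⁻¹ * cond (-1) ((fun x => (x, (-1:ℝ))) ⁻¹' S) := by
  rw [jointOf, Measure.add_apply, Measure.smul_apply, Measure.smul_apply,
    Measure.prod_dirac, Measure.prod_dirac,
    Measure.map_apply measurable_prodMk_right hS,
    Measure.map_apply measurable_prodMk_right hS, smul_eq_mul, smul_eq_mul]

lemma AccP_Pc1_eq {d : ℕ} (μ : Vec d) (σ γ η : ℝ) (w : Inp d) :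
    AccP (Pc1 d μ σ γ η) w
      = (2⁻¹ * condX1 d μ σ γ η 1 {x | 0 < pred w x}
          + 2⁻¹ * condX1 d μ σ γ η (-1) {x | pred w x < 0}).toReal := by
  have hS : MeasurableSet {p : Inp d × ℝ | Real.sign (pred w p.1) = p.2} :=
    measurableSet_eq_fun (my_measurable_sign.comp ((measurable_pred_app w).comp measurable_fst))
      measurable_snd
  have e1 : ((fun x : Inp d => (x, (1:ℝ))) ⁻¹' {p : Inp d × ℝ | Real.sign (pred w p.1) = p.2})
      = {x | 0 < pred w x} := by
    ext x
    simp only [Set.mem_preimage, Set.mem_setOf_eq]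
    exact sign_eq_one_iff' _
  have e2 : ((fun x : Inp d => (x, (-1:ℝ))) ⁻¹' {p : Inp d × ℝ | Real.sign (pred w p.1) = p.2})
      = {x | pred w x < 0} := by
    ext x
    simp only [Set.mem_preimage, Set.mem_setOf_eq]
    exact sign_eq_neg_one_iff' _
  rw [AccP, Pc1, jointOf_apply _ hS, e1, e2]

lemma hyper_null {d : ℕ} (μ : Vec d) (hμ : μ ≠ 0) {γ : ℝ} (hγ : 0 < γ) :
    (volume : Measure (Inp d)) {x | γ * dot μ x.1 + dot μ x.2.1 = 0} = 0 := by
  obtain ⟨i0, hi0⟩ : ∃ i, μ i ≠ 0 := by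
    by_contra h
    push_neg at h
    exact hμ (funext fun i => h i)
  set φ : Inp d →ₗ[ℝ] ℝ :=
    { toFun := fun x => γ * dot μ x.1 + dot μ x.2.1
      map_add' := fun a b => by
        simp only [Prod.fst_add, Prod.snd_add, Pi.add_apply, dot, mul_add,
          Finset.sum_add_distrib]
        ring
      map_smul' := fun c a => by
        simp only [Prod.smul_fst, Prod.smul_snd, Pi.smul_apply, smul_eq_mul, dot,
          RingHom.id_apply]
        simp only [mul_comm, mul_left_comm]
        rw [← Finset.mul_sum, ← Finset.mul_sum]
        ring } with hφ
  have hker : {x : Inp d | γ * dot μ x.1 + dot μ x.2.1 = 0} = (LinearMap.ker φ : Set (Inp d)) := by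
    ext x
    simp [hφ, LinearMap.mem_ker]
  rw [hker]
  haveI h2 : (volume : Measure (Vec d × Vec d)).IsAddHaarMeasure := by
    rw [Measure.volume_eq_prod]
    exact Measure.prod.instIsAddHaarMeasure _ _
  haveI h3 : (volume : Measure (Inp d)).IsAddHaarMeasure := by
    rw [Measure.volume_eq_prod]
    exact Measure.prod.instIsAddHaarMeasure _ _
  refine Measure.addHaar_submodule _ _ ?_
  intro htop
  have h0 : φ ((0 : Vec d), (Pi.single i0 1, (0 : Vec d))) = μ i0 := by
    simp [hφ, dot, Pi.single_apply, mul_ite, Finset.sum_ite_eq']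
  have : ((0 : Vec d), (Pi.single i0 1, (0 : Vec d))) ∈ LinearMap.ker φ := htop ▸ trivial
  rw [LinearMap.mem_ker, h0] at this
  exact hi0 this

end

theorem bayes_optimal_linear_predictor_c1 (d : ℕ) (hd : 1 ≤ d) (μ : Vec d) (hμ : μ ≠ 0)
    (σ γ η : ℝ) (hσ : 0 < σ) (hγ : 0 < γ) (hη : 0 < η)
    (w : Inp d) (hw : w ∈ W1 d) :
    AccP (Pc1 d μ σ γ η) w ≤
      AccP (Pc1 d μ σ γ η)
        ((1 / (vnorm μ * Real.sqrt (1 + γ ^ 2))) • ((γ • μ, μ, (0 : Vec d)) : Inp d)) := by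
  classical
  set c : ℝ := 1 / (vnorm μ * Real.sqrt (1 + γ ^ 2)) with hc_def
  set wstar : Inp d := c • ((γ • μ, μ, (0 : Vec d)) : Inp d) with hwstar
  set u : Inp d → ℝ := fun x => γ * dot μ x.1 + dot μ x.2.1 with hu_def
  set ν1 : Measure (Inp d) := condX1 d μ σ γ η 1 with hν1
  set νm : Measure (Inp d) := condX1 d μ σ γ η (-1) with hνm
  -- positivity of c
  obtain ⟨i0, hi0⟩ : ∃ i, μ i ≠ 0 := by
    by_contra h
    push_neg at h
    exact hμ (funext fun i => h i)
  have hvn : 0 < vnorm μ := by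
    rw [vnorm]
    apply Real.sqrt_pos.mpr
    exact Finset.sum_pos' (fun i _ => sq_nonneg _) ⟨i0, Finset.mem_univ _, by positivity⟩
  have hc : 0 < c := by
    rw [hc_def]
    exact one_div_pos.mpr (mul_pos hvn (Real.sqrt_pos.mpr (by positivity)))
  -- pred wstar = c * u
  have hu_meas : Measurable u := ((measurable_dot_fst μ).const_mul γ).add (measurable_dot_snd1 μ)
  have hpred : ∀ x : Inp d, pred wstar x = c * u x := by
    intro x
    have h1 : ∑ i, (c * (γ * μ i)) * x.1 i = c * (γ * ∑ i, μ i * x.1 i) := by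
      rw [Finset.mul_sum, Finset.mul_sum]
      exact Finset.sum_congr rfl fun i _ => by ring
    have h2 : ∑ i, (c * μ i) * x.2.1 i = c * ∑ i, μ i * x.2.1 i := by
      rw [Finset.mul_sum]
      exact Finset.sum_congr rfl fun i _ => by ring
    simp only [hwstar, pred, dot, Prod.smul_fst, Prod.smul_snd, Pi.smul_apply, smul_eq_mul,
      Pi.zero_apply, mul_zero, zero_mul, Finset.sum_const_zero, add_zero, hu_def]
    rw [h1, h2]
    ring
  set Upos : Set (Inp d) := {x | 0 < u x} with hUpos_def
  set Uneg : Set (Inp d) := {x | u x < 0} with hUneg_def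
  have hUpos : MeasurableSet Upos := measurableSet_lt measurable_const hu_meas
  have hApos_star : {x : Inp d | 0 < pred wstar x} = Upos := by
    ext x
    simp only [Set.mem_setOf_eq, hpred x, hUpos_def]
    exact mul_pos_iff_of_pos_left hc
  have hAneg_star : {x : Inp d | pred wstar x < 0} = Uneg := by
    ext x
    simp only [Set.mem_setOf_eq, hpred x, hUneg_def]
    rw [← neg_pos, ← neg_pos (a := u x), ← mul_neg]
    exact mul_pos_iff_of_pos_left hc
  -- density comparison lemmas
  have comp_le : ∀ S : Set (Inp d), MeasurableSet S → (∀ x ∈ S, u x ≤ 0) → ν1 S ≤ νm S := by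
    intro S hS h
    rw [hν1, hνm, condX1_eq_withDensity μ hσ hγ hη 1, condX1_eq_withDensity μ hσ hγ hη (-1),
      withDensity_apply _ hS, withDensity_apply _ hS]
    exact setLIntegral_mono (measurable_densX1 μ σ γ η (-1)) fun x hx =>
      densX1_le_of_nonpos μ η hσ hγ (h x hx)
  have comp_ge : ∀ S : Set (Inp d), MeasurableSet S → (∀ x ∈ S, 0 ≤ u x) → νm S ≤ ν1 S := by
    intro S hS h
    rw [hν1, hνm, condX1_eq_withDensity μ hσ hγ hη 1, condX1_eq_withDensity μ hσ hγ hη (-1),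
      withDensity_apply _ hS, withDensity_apply _ hS]
    exact setLIntegral_mono (measurable_densX1 μ σ γ η 1) fun x hx =>
      densX1_le_of_nonneg μ η hσ hγ (h x hx)
  have hN : νm {x : Inp d | u x = 0} = 0 := by
    rw [hνm, condX1_eq_withDensity μ hσ hγ hη (-1)]
    exact withDensity_absolutelyContinuous _ _ (hyper_null μ hμ hγ)
  -- the key inequality
  set A : Set (Inp d) := {x | 0 < pred w x} with hA_def
  set B : Set (Inp d) := {x | pred w x < 0} with hB_def
  have hA : MeasurableSet A := measurableSet_lt measurable_const (measurable_pred_app w)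
  have key : ν1 A + νm B ≤ ν1 Upos + νm Uneg := by
    have hBsub : B ⊆ Aᶜ := by
      intro x hx hxA
      exact absurd hxA (by simp only [hA_def, Set.mem_setOf_eq]; exact not_lt.mpr hx.le)
    have step1 : νm B ≤ νm Aᶜ := measure_mono hBsub
    have split1 : ν1 A = ν1 (A ∩ Upos) + ν1 (A \ Upos) := (measure_inter_add_diff A hUpos).symm
    have est1 : ν1 (A \ Upos) ≤ νm (A \ Upos) :=
      comp_le _ (hA.diff hUpos) fun x hx => not_lt.mp hx.2
    have split2 : νm Aᶜ = νm (Aᶜ ∩ Upos) + νm (Aᶜ \ Upos) :=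
      (measure_inter_add_diff Aᶜ hUpos).symm
    have est2 : νm (Aᶜ ∩ Upos) ≤ ν1 (Aᶜ ∩ Upos) :=
      comp_ge _ (hA.compl.inter hUpos) fun x hx => (hx.2 : 0 < u x).le
    have e3 : ν1 (A ∩ Upos) + ν1 (Aᶜ ∩ Upos) = ν1 Upos := by
      rw [Set.inter_comm A, Set.inter_comm Aᶜ, ← Set.diff_eq]
      exact measure_inter_add_diff Upos hA
    have e4 : νm (A \ Upos) + νm (Aᶜ \ Upos) = νm Uposᶜ := by
      rw [show A \ Upos = Uposᶜ ∩ A by rw [Set.diff_eq, Set.inter_comm],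
        show Aᶜ \ Upos = Uposᶜ \ A by rw [Set.diff_eq, Set.diff_eq, Set.inter_comm]]
      exact measure_inter_add_diff Uposᶜ hA
    have est3 : νm Uposᶜ ≤ νm Uneg := by
      have hsub : Uposᶜ ⊆ Uneg ∪ {x : Inp d | u x = 0} := by
        intro x hx
        rcases lt_trichotomy (u x) 0 with h | h | h
        · exact Or.inl h
        · exact Or.inr h
        · exact absurd h hx
      calc νm Uposᶜ ≤ νm (Uneg ∪ {x : Inp d | u x = 0}) := measure_mono hsub
        _ ≤ νm Uneg + νm {x : Inp d | u x = 0} := measure_union_le _ _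
        _ = νm Uneg := by rw [hN, add_zero]
    calc ν1 A + νm B ≤ ν1 A + νm Aᶜ := by gcongr
      _ = (ν1 (A ∩ Upos) + ν1 (A \ Upos)) + (νm (Aᶜ ∩ Upos) + νm (Aᶜ \ Upos)) := by
          rw [← split1, ← split2]
      _ ≤ (ν1 (A ∩ Upos) + νm (A \ Upos)) + (ν1 (Aᶜ ∩ Upos) + νm (Aᶜ \ Upos)) := by
          gcongr
      _ = (ν1 (A ∩ Upos) + ν1 (Aᶜ ∩ Upos)) + (νm (A \ Upos) + νm (Aᶜ \ Upos)) := by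
          ring
      _ = ν1 Upos + νm Uposᶜ := by rw [e3, e4]
      _ ≤ ν1 Upos + νm Uneg := by gcongr
  -- conclude
  rw [AccP_Pc1_eq, AccP_Pc1_eq]
  rw [← hν1, ← hνm, ← hA_def, ← hB_def, hApos_star, hAneg_star]
  refine ENNReal.toReal_mono ?_ ?_
  · exact ENNReal.add_ne_top.mpr
      ⟨ENNReal.mul_ne_top (by simp) (measure_ne_top _ _),
       ENNReal.mul_ne_top (by simp) (measure_ne_top _ _)⟩
  · rw [← mul_add, ← mul_add]
    exact mul_le_mul_right key _
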